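/- For two Dyck paths P and Q of size n, P ≤ Q in the Tamari lattice if and only if D_P(i) ≤ D_Q(i) for all 1 ≤ i ≤ n, where D_A(i) is the distance (number of intermediate letters plus 1) from the i-th up step of A to its matching down step. -/

import Mathlib

/-- A Dyck word: `true` is an up step `u`, `false` is a down step `d`. -/
def IsDyck (w : List Bool) : Prop :=
  w.count true = w.count false ∧ ∀ k, (w.take k).count false ≤ (w.take k).count true

/-- Position (0-based index) of the `i`-th (1-based) up step of `w`. -/
noncomputable def upPos (w : List Bool) (i : ℕ) : ℕ :=
  sInf {j | w.getD j false = true ∧ (w.take (j + 1)).count true = i}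

/-- Position of the down step matching the up step at position `k`:
the first later down step such that the letters strictly in between form a Dyck word. -/
noncomputable def matchIdx (w : List Bool) (k : ℕ) : ℕ :=
  sInf {m | k < m ∧ w.getD m true = false ∧ IsDyck ((w.drop (k + 1)).take (m - (k + 1)))}

/-- The distance function `D_w(i)`: number of letters between the `i`-th up step and its
matching down step, plus one. -/
noncomputable def distFn (w : List Bool) (i : ℕ) : ℕ :=
  matchIdx w (upPos w i) - upPos w i

/-- One rotation step of the Tamari order on Dyck words: a factor `d · B` (with `B` a
nonempty Dyck word) is replaced by `B · d`. -/
def TamariStep (P Q : List Bool) : Prop :=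
  ∃ A B C : List Bool, IsDyck B ∧ B ≠ [] ∧
    P = A ++ false :: (B ++ C) ∧ Q = A ++ (B ++ false :: C)

/-- The Tamari order on Dyck words: reflexive-transitive closure of rotation steps. -/
def TamariLe : List Bool → List Bool → Prop := Relation.ReflTransGen TamariStep

namespace Tam

/-- number of `u`s among the first `j` letters -/
def f (w : List Bool) (j : ℕ) : ℕ := (w.take j).count true
/-- number of `d`s among the first `j` letters -/
def g (w : List Bool) (j : ℕ) : ℕ := (w.take j).count false
/-- height after `j` letters -/
def h (w : List Bool) (j : ℕ) : ℤ := (f w j : ℤ) - (g w j : ℤ)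

@[simp] lemma f_zero (w : List Bool) : f w 0 = 0 := rfl
@[simp] lemma g_zero (w : List Bool) : g w 0 = 0 := rfl
@[simp] lemma h_zero (w : List Bool) : h w 0 = 0 := by simp [h]

lemma count_true_add_count_false (w : List Bool) :
    w.count true + w.count false = w.length := by
  induction w with
  | nil => rfl
  | cons a l ih => cases a <;> simp [List.count_cons, ih] <;> omega

lemma take_succ_of_lt (w : List Bool) {j : ℕ} (hj : j < w.length) :
    w.take (j+1) = w.take j ++ [w[j]] := by
  rw [← List.take_concat_get (l := w) (i := j) hj, List.concat_eq_append]

lemma f_succ (w : List Bool) {j : ℕ} (hj : j < w.length) :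
    f w (j+1) = f w j + (if w[j] = true then 1 else 0) := by
  rw [f, take_succ_of_lt w hj, List.count_append]
  cases hw : w[j] <;> simp [f, hw]

lemma g_succ (w : List Bool) {j : ℕ} (hj : j < w.length) :
    g w (j+1) = g w j + (if w[j] = true then 0 else 1) := by
  rw [g, take_succ_of_lt w hj, List.count_append]
  cases hw : w[j] <;> simp [g, hw]

lemma f_of_len_le (w : List Bool) {j : ℕ} (hj : w.length ≤ j) :
    f w j = w.count true := by
  rw [f, List.take_of_length_le hj]

lemma g_of_len_le (w : List Bool) {j : ℕ} (hj : w.length ≤ j) :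
    g w j = w.count false := by
  rw [g, List.take_of_length_le hj]

lemma f_mono (w : List Bool) {j j' : ℕ} (hj : j ≤ j') : f w j ≤ f w j' := by
  have : w.take j = (w.take j').take j := by rw [List.take_take, min_eq_left hj]
  rw [f, f, this]
  exact (List.take_sublist _ _).count_le _

lemma g_mono (w : List Bool) {j j' : ℕ} (hj : j ≤ j') : g w j ≤ g w j' := by
  have : w.take j = (w.take j').take j := by rw [List.take_take, min_eq_left hj]
  rw [g, g, this]
  exact (List.take_sublist _ _).count_le _

lemma f_add_g (w : List Bool) (j : ℕ) : f w j + g w j = min j w.length := by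
  rw [f, g, count_true_add_count_false (w.take j), List.length_take]
  try rfl

lemma h_succ (w : List Bool) {j : ℕ} (hj : j < w.length) :
    h w (j+1) = h w j + (if w[j] = true then 1 else -1) := by
  have hf := f_succ w hj
  have hg := g_succ w hj
  cases hw : w[j]
  · simp [hw] at hf hg
    simp only [h, hf, hg, hw]
    push_cast
    ring
  · simp [hw] at hf hg
    simp only [h, hf, hg, hw]
    push_cast
    omega

lemma h_of_len_le (w : List Bool) {j : ℕ} (hj : w.length ≤ j) :
    h w j = h w w.length := by
  simp [h, f_of_len_le w hj, g_of_len_le w hj, f_of_len_le w (le_refl _),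
    g_of_len_le w (le_refl _)]

lemma h_step (w : List Bool) {j : ℕ} (hj : j < w.length) :
    h w (j+1) = h w j + 1 ∨ h w (j+1) = h w j - 1 := by
  rw [h_succ w hj]
  cases hw : w[j] <;> simp [hw, sub_eq_add_neg]

lemma isDyck_iff_h (w : List Bool) :
    IsDyck w ↔ (h w w.length = 0 ∧ ∀ j, 0 ≤ h w j) := by
  have hf : f w w.length = w.count true := f_of_len_le w (le_refl _)
  have hg : g w w.length = w.count false := g_of_len_le w (le_refl _)
  constructor
  · rintro ⟨h1, h2⟩
    constructor
    · simp [h, hf, hg, h1]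
    · intro j
      have := h2 j
      simp [h, sub_nonneg]
      exact_mod_cast this
  · rintro ⟨h1, h2⟩
    constructor
    · simp [h, hf, hg, sub_eq_zero] at h1
      exact_mod_cast h1
    · intro k
      have := h2 k
      simp [h, sub_nonneg] at this
      exact_mod_cast this

lemma isDyck_h_len {w : List Bool} (hw : IsDyck w) : h w w.length = 0 :=
  ((isDyck_iff_h w).1 hw).1

lemma isDyck_h_nonneg {w : List Bool} (hw : IsDyck w) (j : ℕ) : 0 ≤ h w j :=
  ((isDyck_iff_h w).1 hw).2 j

/-- discrete IVT, downward -/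
lemma ivt_down (F : ℕ → ℤ) (c : ℤ) :
    ∀ d a, (∀ t, a ≤ t → t < a + d → F (t+1) = F t + 1 ∨ F (t+1) = F t - 1) →
    c ≤ F a → F (a + d) ≤ c → ∃ t, a ≤ t ∧ t ≤ a + d ∧ F t = c := by
  intro d
  induction d with
  | zero => intro a _ h1 h2; exact ⟨a, le_refl _, by omega, le_antisymm h2 h1⟩
  | succ d ih =>
    intro a hstep h1 h2
    rcases eq_or_lt_of_le h1 with hc | hc
    · exact ⟨a, le_refl _, by omega, hc.symm⟩
    · have hs := hstep a (le_refl _) (by omega)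
      have h3 : c ≤ F (a+1) := by omega
      have h4 : F (a + 1 + d) ≤ c := by
        have : a + 1 + d = a + (d+1) := by omega
        rw [this]; exact h2
      obtain ⟨t, ht1, ht2, ht3⟩ := ih (a+1) (fun t ha hb => hstep t (by omega) (by omega)) h3 h4
      exact ⟨t, by omega, by omega, ht3⟩

/-- discrete IVT, upward -/
lemma ivt_up (F : ℕ → ℤ) (c : ℤ) :
    ∀ d a, (∀ t, a ≤ t → t < a + d → F (t+1) = F t + 1 ∨ F (t+1) = F t - 1) →
    F a ≤ c → c ≤ F (a + d) → ∃ t, a ≤ t ∧ t ≤ a + d ∧ F t = c := by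
  intro d a hstep h1 h2
  obtain ⟨t, ht1, ht2, ht3⟩ := ivt_down (fun t => - F t) (-c) d a
    (fun t ha hb => by rcases hstep t ha hb with hh | hh <;> simp [hh] <;> omega)
    (by simp; omega) (by simp; omega)
  exact ⟨t, ht1, ht2, by simpa using ht3⟩


lemma getD_eq_get (w : List Bool) {j : ℕ} (hj : j < w.length) (d : Bool) :
    w.getD j d = w[j] := List.getD_eq_getElem w d hj

lemma lt_length_of_getD_false {w : List Bool} {j : ℕ} (hj : w.getD j false = true) :
    j < w.length := by
  by_contra hcon
  rw [List.getD_eq_default w false (by omega)] at hj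
  exact Bool.false_ne_true hj

lemma lt_length_of_getD_true {w : List Bool} {j : ℕ} (hj : w.getD j true = false) :
    j < w.length := by
  by_contra hcon
  rw [List.getD_eq_default w true (by omega)] at hj
  exact Bool.false_ne_true hj.symm

lemma seg_count_true (w : List Bool) (a u : ℕ) :
    f w a + ((w.drop a).take u).count true = f w (a + u) := by
  rw [f, f, List.take_add, List.count_append]

lemma seg_count_false (w : List Bool) (a u : ℕ) :
    g w a + ((w.drop a).take u).count false = g w (a + u) := by
  rw [g, g, List.take_add, List.count_append]

lemma seg_isDyck_iff (w : List Bool) {a m : ℕ} (ham : a ≤ m) (hm : m ≤ w.length) :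
    IsDyck ((w.drop a).take (m - a)) ↔
      (h w m = h w a ∧ ∀ t, a ≤ t → t ≤ m → h w a ≤ h w t) := by
  have hlen : ∀ u : ℕ, ((w.drop a).take (m-a)).take u = (w.drop a).take (min u (m-a)) := by
    intro u; rw [List.take_take]
  constructor
  · rintro ⟨h1, h2⟩
    have e1 := seg_count_true w a (m-a)
    have e2 := seg_count_false w a (m-a)
    rw [show a + (m-a) = m by omega] at e1 e2
    constructor
    · simp only [h]; omega
    · intro t hat htm
      have h2t := h2 (t - a)
      rw [hlen, min_eq_left (by omega)] at h2t
      have e3 := seg_count_true w a (t-a)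
      have e4 := seg_count_false w a (t-a)
      rw [show a + (t-a) = t by omega] at e3 e4
      simp only [h] at *
      omega
  · rintro ⟨h1, h2⟩
    simp only [h] at h1 h2
    constructor
    · have e1 := seg_count_true w a (m-a)
      have e2 := seg_count_false w a (m-a)
      rw [show a + (m-a) = m by omega] at e1 e2
      omega
    · intro s
      have h2t := h2 (a + min s (m-a)) (by omega) (by omega)
      rw [hlen]
      have e3 := seg_count_true w a (min s (m-a))
      have e4 := seg_count_false w a (min s (m-a))
      omega

lemma up_eq_of (w : List Bool) {j i : ℕ} (hj : w.getD j false = true)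
    (hf : f w (j+1) = i) : upPos w i = j := by
  have hjl : j < w.length := lt_length_of_getD_false hj
  have hju : w[j] = true := by rw [← getD_eq_get w hjl false]; exact hj
  have key : ∀ j', w.getD j' false = true → f w (j'+1) = i → j' = j := by
    intro j' hj' hf'
    have hjl' : j' < w.length := lt_length_of_getD_false hj'
    have hju' : w[j'] = true := by rw [← getD_eq_get w hjl' false]; exact hj'
    by_contra hne
    rcases Nat.lt_or_ge j' j with hlt | hge
    · have h1 : f w (j'+1) ≤ f w j := f_mono w (by omega)
      have h2 : f w (j+1) = f w j + 1 := by rw [f_succ w hjl, hju]; simp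
      omega
    · have hlt : j < j' := by omega
      have h1 : f w (j+1) ≤ f w j' := f_mono w (by omega)
      have h2 : f w (j'+1) = f w j' + 1 := by rw [f_succ w hjl', hju']; simp
      omega
  have hne : {j' | w.getD j' false = true ∧ (w.take (j' + 1)).count true = i}.Nonempty :=
    ⟨j, hj, hf⟩
  have hmem := Nat.sInf_mem hne
  exact key _ hmem.1 hmem.2

lemma up_spec (w : List Bool) {i : ℕ} (h1 : 1 ≤ i) (h2 : i ≤ w.count true) :
    upPos w i < w.length ∧ w.getD (upPos w i) false = true ∧
    f w (upPos w i + 1) = i ∧ f w (upPos w i) = i - 1 := by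
  -- find the witness position
  have hTne : {t | i ≤ f w t}.Nonempty :=
    ⟨w.length, by show i ≤ f w w.length; rw [f_of_len_le w (le_refl _)]; exact h2⟩
  set t0 := sInf {t | i ≤ f w t} with ht0
  have ht0mem : i ≤ f w t0 := Nat.sInf_mem hTne
  have ht0pos : 0 < t0 := by
    rcases Nat.eq_zero_or_pos t0 with hz | hp
    · rw [hz] at ht0mem; simp [f] at ht0mem; omega
    · exact hp
  have ht0pred' : t0 - 1 ∉ {t | i ≤ f w t} := Nat.notMem_of_lt_sInf (by omega)
  have ht0pred : ¬ i ≤ f w (t0 - 1) := ht0pred'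
  have hlen : t0 - 1 < w.length := by
    by_contra hcon
    rw [f_of_len_le w (by omega)] at ht0pred
    have : f w t0 ≤ w.count true := by
      rcases Nat.lt_or_ge t0 w.length with hh | hh
      · rw [← f_of_len_le w (le_refl w.length)]; exact f_mono w (by omega)
      · rw [f_of_len_le w hh]
    omega
  have hstep := f_succ w hlen
  rw [show t0 - 1 + 1 = t0 by omega] at hstep
  have hletter : w[t0-1] = true := by
    cases hw : w[t0-1]
    · rw [hw] at hstep; simp at hstep; omega
    · rfl
  rw [hletter] at hstep; simp at hstep
  have hft0 : f w t0 = i := by omega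
  have hgetD : w.getD (t0-1) false = true := by rw [getD_eq_get w hlen]; exact hletter
  have hup : upPos w i = t0 - 1 := up_eq_of w hgetD (by rw [show t0 - 1 + 1 = t0 by omega]; exact hft0)
  refine ⟨by omega, by rw [hup]; exact hgetD, ?_, ?_⟩
  · rw [hup, show t0 - 1 + 1 = t0 by omega]; exact hft0
  · rw [hup]; omega

lemma up_mono (w : List Bool) {i i' : ℕ} (h1 : 1 ≤ i) (hii' : i < i')
    (h2 : i' ≤ w.count true) : upPos w i < upPos w i' := by
  obtain ⟨ha1, ha2, ha3, ha4⟩ := up_spec w h1 (by omega : i ≤ w.count true)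
  obtain ⟨hb1, hb2, hb3, hb4⟩ := up_spec w (by omega : 1 ≤ i') h2
  by_contra hcon
  have : f w (upPos w i') + 1 ≤ f w (upPos w i) + 1 := by
    have := f_mono w (show upPos w i' ≤ upPos w i by omega)
    omega
  omega

lemma match_spec {w : List Bool} (hw : IsDyck w) {k : ℕ} (hk : k < w.length)
    (hku : w[k] = true) :
    k < matchIdx w k ∧ matchIdx w k < w.length ∧
    w.getD (matchIdx w k) true = false ∧
    h w (matchIdx w k + 1) = h w k ∧
    (∀ t, k < t → t ≤ matchIdx w k → h w k < h w t) ∧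
    (∀ m', k < m' → h w (m' + 1) = h w k → matchIdx w k ≤ m') := by
  classical
  have hk1 : h w (k+1) = h w k + 1 := by rw [h_succ w hk, hku]; simp
  -- existence of a return to level h w k strictly below the length
  have hex : ∃ m0, k < m0 ∧ m0 < w.length ∧ h w (m0+1) = h w k := by
    obtain ⟨t, ht1, ht2, ht3⟩ := ivt_down (h w) (h w k) (w.length - (k+1)) (k+1)
      (fun t ha hb => h_step w (by omega))
      (by omega)
      (by rw [show k + 1 + (w.length - (k+1)) = w.length by omega, isDyck_h_len hw]
          exact isDyck_h_nonneg hw k)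
    have htne : t ≠ k + 1 := by intro hcon; rw [hcon] at ht3; omega
    refine ⟨t - 1, by omega, by omega, ?_⟩
    rw [show t - 1 + 1 = t by omega]; exact ht3
  obtain ⟨m0, hm01, hm02, hm03⟩ := hex
  set M' : Set ℕ := {m | k < m ∧ h w (m+1) = h w k} with hM'
  have hM'ne : M'.Nonempty := ⟨m0, hm01, hm03⟩
  set μ := sInf M' with hμ
  have hμmem : k < μ ∧ h w (μ+1) = h w k := Nat.sInf_mem hM'ne
  have hμle : ∀ x ∈ M', μ ≤ x := fun x hx => Nat.sInf_le hx
  have hμlt : μ < w.length := lt_of_le_of_lt (hμle m0 ⟨hm01, hm03⟩) hm02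
  -- interior heights are strictly above h w k
  have hint : ∀ t, k < t → t ≤ μ → h w k < h w t := by
    by_contra hcon
    push_neg at hcon
    obtain ⟨t1, ht11, ht12, ht13⟩ := hcon
    set T : Set ℕ := {t | k < t ∧ t ≤ μ ∧ h w t ≤ h w k} with hT
    have hTne : T.Nonempty := ⟨t1, ht11, ht12, ht13⟩
    set t0 := sInf T with ht0
    have ht0mem : k < t0 ∧ t0 ≤ μ ∧ h w t0 ≤ h w k := Nat.sInf_mem hTne
    have ht0ne : t0 ≠ k + 1 := by intro hcon2; rw [hcon2] at ht0mem; omega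
    have hpred : t0 - 1 ∉ T := Nat.notMem_of_lt_sInf (by omega)
    have hpred2 : h w k < h w (t0 - 1) := by
      by_contra hcon3
      exact hpred ⟨by omega, by omega, by omega⟩
    have hstep := h_step w (show t0 - 1 < w.length by omega)
    rw [show t0 - 1 + 1 = t0 by omega] at hstep
    have ht0eq : h w t0 = h w k := by omega
    have : μ ≤ t0 - 1 := hμle _ ⟨by omega, by rw [show t0 - 1 + 1 = t0 by omega]; exact ht0eq⟩
    omega
  -- the letter at μ is a down-step
  have hletter : w[μ] = false := by
    cases hwμ : w[μ]
    · rfl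
    · exfalso
      have := h_succ w hμlt
      rw [hwμ] at this; simp at this
      have h2 := hint μ hμmem.1 (le_refl _)
      omega
  have hμsucc : h w (μ + 1) = h w μ - 1 := by
    have := h_succ w hμlt; rw [hletter] at this; simp at this; omega
  have hμh : h w μ = h w k + 1 := by omega
  -- μ belongs to the defining set of matchIdx
  have hμM : k < μ ∧ w.getD μ true = false ∧ IsDyck ((w.drop (k + 1)).take (μ - (k + 1))) := by
    refine ⟨hμmem.1, by rw [getD_eq_get w hμlt]; exact hletter, ?_⟩
    rw [seg_isDyck_iff w (by omega) (by omega)]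
    constructor
    · omega
    · intro t hat htm
      rcases Nat.eq_or_lt_of_le hat with he | hlt
      · subst he; omega
      · have := hint t (by omega) htm; omega
  -- every member of the defining set is in M'
  have hsub : ∀ m ∈ {m | k < m ∧ w.getD m true = false ∧
      IsDyck ((w.drop (k + 1)).take (m - (k + 1)))}, m ∈ M' := by
    rintro m ⟨hm1, hm2, hm3⟩
    have hmlt : m < w.length := lt_length_of_getD_true hm2
    have hmf : w[m] = false := by rw [← getD_eq_get w hmlt true]; exact hm2
    rw [seg_isDyck_iff w (by omega) (by omega)] at hm3
    have := h_succ w hmlt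
    rw [hmf] at this; simp at this
    exact ⟨hm1, by omega⟩
  have hMne : {m | k < m ∧ w.getD m true = false ∧
      IsDyck ((w.drop (k + 1)).take (m - (k + 1)))}.Nonempty := ⟨μ, hμM⟩
  have heq : matchIdx w k = μ := by
    apply le_antisymm
    · exact Nat.sInf_le hμM
    · exact hμle _ (hsub _ (Nat.sInf_mem hMne))
  rw [heq]
  exact ⟨hμmem.1, hμlt, by rw [getD_eq_get w hμlt]; exact hletter, hμmem.2, hint,
    fun m' h1 h2 => hμle m' ⟨h1, h2⟩⟩

lemma match_unique {w : List Bool} (hw : IsDyck w) {k : ℕ} (hk : k < w.length)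
    (hku : w[k] = true) {m : ℕ} (h1 : k < m) (h2 : h w (m+1) = h w k)
    (h3 : ∀ t, k < t → t ≤ m → h w k < h w t) : matchIdx w k = m := by
  obtain ⟨s1, s2, s3, s4, s5, s6⟩ := match_spec hw hk hku
  have hle : matchIdx w k ≤ m := s6 m h1 h2
  rcases Nat.eq_or_lt_of_le hle with he | hlt
  · exact he
  · exfalso
    have := h3 (matchIdx w k + 1) (by omega) (by omega)
    omega


lemma f_le_count (w : List Bool) (j : ℕ) : f w j ≤ w.count true := by
  rcases Nat.lt_or_ge j w.length with hh | hh
  · rw [← f_of_len_le w (le_refl w.length)]; exact f_mono w (by omega)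
  · rw [f_of_len_le w (by omega)]

lemma dyck_g_le_f {w : List Bool} (hw : IsDyck w) (j : ℕ) : g w j ≤ f w j := hw.2 j

lemma up_lt_len {w : List Bool} {i : ℕ} (h1 : 1 ≤ i) (h2 : i ≤ w.count true) :
    upPos w i < w.length := (up_spec w h1 h2).1

lemma up_true {w : List Bool} {i : ℕ} (h1 : 1 ≤ i) (h2 : i ≤ w.count true) :
    w[upPos w i]'(up_lt_len h1 h2) = true := by
  have := (up_spec w h1 h2).2.1
  rw [getD_eq_get w (up_lt_len h1 h2)] at this
  exact this

/-- the key numerical facts about the distance function -/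
lemma dist_facts {w : List Bool} (hw : IsDyck w) {i : ℕ} (h1 : 1 ≤ i)
    (h2 : i ≤ w.count true) :
    distFn w i = matchIdx w (upPos w i) - upPos w i ∧
    matchIdx w (upPos w i) - upPos w i = 2 * (f w (matchIdx w (upPos w i)) - i) + 1 ∧
    i ≤ f w (matchIdx w (upPos w i)) ∧ f w (matchIdx w (upPos w i)) ≤ w.count true := by
  obtain ⟨hu1, hu2, hu3, hu4⟩ := up_spec w h1 h2
  obtain ⟨s1, s2, s3, s4, s5, s6⟩ := match_spec hw hu1 (up_true h1 h2)
  set k := upPos w i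
  set m := matchIdx w k
  have hfm : i ≤ f w m := hu3 ▸ f_mono w (by omega : k + 1 ≤ m)
  have hmd : w[m]'s2 = false := by rw [← getD_eq_get w s2 true]; exact s3
  have hhm : h w m = h w k + 1 := by
    have := h_succ w s2; rw [hmd] at this; simp at this; omega
  have e1 := f_add_g w m
  have e2 := f_add_g w (k+1)
  rw [min_eq_left (by omega : m ≤ w.length)] at e1
  rw [min_eq_left (by omega : k + 1 ≤ w.length)] at e2
  have hk1 : h w (k+1) = h w k + 1 := by
    rw [h_succ w hu1, up_true h1 h2]; simp
  have hball : h w m = h w (k+1) := by omega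
  simp only [h] at hball
  refine ⟨rfl, by omega, hfm, f_le_count w m⟩

lemma dist_le_bound {w : List Bool} (hw : IsDyck w) {i : ℕ} (h1 : 1 ≤ i)
    (h2 : i ≤ w.count true) : distFn w i ≤ 2 * (w.count true - i) + 1 := by
  obtain ⟨e1, e2, e3, e4⟩ := dist_facts hw h1 h2
  omega

lemma up_le_bound {w : List Bool} (hw : IsDyck w) {i : ℕ} (h1 : 1 ≤ i)
    (h2 : i ≤ w.count true) : upPos w i ≤ 2 * (i - 1) := by
  obtain ⟨hu1, hu2, hu3, hu4⟩ := up_spec w h1 h2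
  have e1 := f_add_g w (upPos w i)
  rw [min_eq_left (by omega : upPos w i ≤ w.length)] at e1
  have := dyck_g_le_f hw (upPos w i)
  omega

/-- nested matched intervals -/
lemma nesting {w : List Bool} (hw : IsDyck w) {i j : ℕ} (h1 : 1 ≤ i) (hij : i < j)
    (h2 : i ≤ w.count true)
    (hj2 : j ≤ f w (matchIdx w (upPos w i))) :
    matchIdx w (upPos w j) < matchIdx w (upPos w i) := by
  have hjc : j ≤ w.count true := le_trans hj2 (f_le_count w _)
  obtain ⟨hu1, hu2, hu3, hu4⟩ := up_spec w h1 h2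
  obtain ⟨s1, s2, s3, s4, s5, s6⟩ := match_spec hw hu1 (up_true h1 h2)
  obtain ⟨hv1, hv2, hv3, hv4⟩ := up_spec w (by omega : 1 ≤ j) hjc
  obtain ⟨t1, t2, t3, t4, t5, t6⟩ := match_spec hw hv1 (up_true (by omega : 1 ≤ j) hjc)
  set ki := upPos w i
  set mi := matchIdx w ki
  set kj := upPos w j
  have hkk : ki < kj := up_mono w h1 hij hjc
  have hkjmi : kj < mi := by
    by_contra hcon
    have : f w mi ≤ f w kj := f_mono w (by omega)
    omega
  have hhigh : h w ki < h w kj := s5 kj hkk (by omega)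
  have hkj1 : h w (kj + 1) = h w kj + 1 := by
    rw [h_succ w hv1, up_true (by omega : 1 ≤ j) hjc]; simp
  -- find a return to level h w kj strictly before mi
  obtain ⟨t, ht1, ht2, ht3⟩ := ivt_down (h w) (h w kj) ((mi + 1) - (kj + 1)) (kj + 1)
    (fun t ha hb => h_step w (by omega))
    (by omega)
    (by rw [show kj + 1 + (mi + 1 - (kj + 1)) = mi + 1 by omega]; omega)
  rw [show kj + 1 + (mi + 1 - (kj + 1)) = mi + 1 by omega] at ht2
  have htne1 : t ≠ kj + 1 := by intro hcon; rw [hcon] at ht3; omega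
  have htne2 : t ≠ mi + 1 := by intro hcon; rw [hcon] at ht3; omega
  have : matchIdx w kj ≤ t - 1 := t6 (t - 1) (by omega)
    (by rw [show t - 1 + 1 = t by omega]; exact ht3)
  omega

/-- every down-step is the match of a unique up-step -/
lemma down_owner {w : List Bool} (hw : IsDyck w) {m : ℕ} (hm : m < w.length)
    (hmd : w[m] = false) :
    ∃ i, 1 ≤ i ∧ i ≤ w.count true ∧ matchIdx w (upPos w i) = m := by
  classical
  have hstepm := h_succ w hm
  rw [hmd] at hstepm; simp at hstepm
  have hc0 : 0 ≤ h w (m+1) := isDyck_h_nonneg hw (m+1)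
  -- find some position at level h w (m+1)
  obtain ⟨t, ht1, ht2, ht3⟩ := ivt_up (h w) (h w (m+1)) m 0
    (fun t ha hb => h_step w (by omega))
    (by simp; omega) (by simp; omega)
  simp at ht2
  set k := Nat.findGreatest (fun j => h w j = h w (m+1)) m with hkdef
  have hkspec : h w k = h w (m+1) :=
    Nat.findGreatest_spec (P := fun j => h w j = h w (m+1)) ht2 ht3
  have hkle : k ≤ m := Nat.findGreatest_le m
  have hkgr : ∀ t', k < t' → t' ≤ m → h w t' ≠ h w (m+1) :=
    fun t' h1 h2 => Nat.findGreatest_is_greatest h1 h2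
  have hkm : k < m := by
    rcases Nat.eq_or_lt_of_le hkle with he | hlt
    · exfalso; rw [he] at hkspec; omega
    · exact hlt
  -- interior heights strictly above
  have hint : ∀ t', k < t' → t' ≤ m → h w (m+1) < h w t' := by
    intro t' hh1 hh2
    by_contra hcon
    have hne := hkgr t' hh1 hh2
    have hlt' : h w t' < h w (m+1) := by omega
    obtain ⟨t'', hta, htb, htc⟩ := ivt_up (h w) (h w (m+1)) (m - t') t'
      (fun s ha hb => h_step w (by omega))
      (by omega) (by rw [show t' + (m - t') = m by omega]; omega)
    exact hkgr t'' (by omega) (by omega) htc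
  -- the letter at k is an up-step
  have hku : w[k]'(by omega) = true := by
    cases hk : w[k]'(by omega)
    · exfalso
      have := h_succ w (show k < w.length by omega)
      rw [hk] at this; simp at this
      have := hint (k+1) (by omega) (by omega)
      omega
    · rfl
  set i := f w (k+1) with hidef
  have hi1 : 1 ≤ i := by
    have := f_succ w (show k < w.length by omega)
    rw [hku] at this; simp at this; omega
  have hi2 : i ≤ w.count true := f_le_count w (k+1)
  have hup : upPos w i = k :=
    up_eq_of w (by rw [getD_eq_get w (by omega : k < w.length)]; exact hku) rfl
  refine ⟨i, hi1, hi2, ?_⟩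
  rw [hup]
  exact match_unique hw (by omega) hku hkm (by omega)
    (fun t' ha hb => by have := hint t' ha hb; omega)

lemma owner_unique {w : List Bool} (hw : IsDyck w) {i i' : ℕ}
    (h1 : 1 ≤ i) (h2 : i ≤ w.count true) (h1' : 1 ≤ i') (h2' : i' ≤ w.count true)
    (he : matchIdx w (upPos w i) = matchIdx w (upPos w i')) : i = i' := by
  obtain ⟨hu1, hu2, hu3, hu4⟩ := up_spec w h1 h2
  obtain ⟨s1, s2, s3, s4, s5, s6⟩ := match_spec hw hu1 (up_true h1 h2)
  obtain ⟨hv1, hv2, hv3, hv4⟩ := up_spec w h1' h2'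
  obtain ⟨t1, t2, t3, t4, t5, t6⟩ := match_spec hw hv1 (up_true h1' h2')
  rw [he] at s4 s5
  have hkk : upPos w i = upPos w i' := by
    by_contra hne
    rcases Nat.lt_or_ge (upPos w i) (upPos w i') with hlt | hge
    · have := s5 (upPos w i') hlt (by omega)
      omega
    · have := t5 (upPos w i) (by omega) (by omega)
      omega
  rw [hkk] at hu3
  omega


lemma f_append (X Y : List Bool) (j : ℕ) : f (X ++ Y) j = f X j + f Y (j - X.length) := by
  rw [f, f, f, List.take_append, List.count_append]

lemma g_append (X Y : List Bool) (j : ℕ) : g (X ++ Y) j = g X j + g Y (j - X.length) := by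
  rw [g, g, g, List.take_append, List.count_append]

lemma h_append (X Y : List Bool) (j : ℕ) : h (X ++ Y) j = h X j + h Y (j - X.length) := by
  simp [h, f_append, g_append]; push_cast; ring

@[simp] lemma f_single_false (u : ℕ) : f [false] u = 0 := by
  cases u with
  | zero => rfl
  | succ v => rw [f, List.take_of_length_le (by simp)]; rfl

@[simp] lemma g_single_false (u : ℕ) : g [false] u = min u 1 := by
  cases u with
  | zero => rfl
  | succ v => rw [g, List.take_of_length_le (by simp)]; simp

lemma h_single_false (u : ℕ) : h [false] u = -(min u 1 : ℕ) := by
  simp [h]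

lemma f_cons_false (X : List Bool) (u : ℕ) : f (false :: X) u = f X (u - 1) := by
  have : (false :: X) = [false] ++ X := rfl
  rw [this, f_append]
  simp

lemma g_cons_false (X : List Bool) (u : ℕ) : g (false :: X) u = min u 1 + g X (u - 1) := by
  have : (false :: X) = [false] ++ X := rfl
  rw [this, g_append]
  simp

lemma h_cons_false (X : List Bool) (u : ℕ) :
    h (false :: X) u = -(min u 1 : ℕ) + h X (u - 1) := by
  simp [h, f_cons_false, g_cons_false]; push_cast; ring

section Rot

variable (A B C : List Bool)

lemma rot_len : (A ++ false :: (B ++ C)).length = A.length + B.length + C.length + 1 ∧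
    (A ++ (B ++ false :: C)).length = A.length + B.length + C.length + 1 := by
  constructor <;> simp <;> omega

lemma rot_f_low {j : ℕ} (hj : j ≤ A.length) :
    f (A ++ (B ++ false :: C)) j = f (A ++ false :: (B ++ C)) j := by
  rw [f_append, f_append, f_append, f_cons_false, f_cons_false, f_append]
  have e1 : j - A.length = 0 := by omega
  simp [e1]

lemma rot_h_low {j : ℕ} (hj : j ≤ A.length) :
    h (A ++ (B ++ false :: C)) j = h (A ++ false :: (B ++ C)) j := by
  rw [h_append, h_append, h_append, h_cons_false, h_cons_false, h_append]
  have e1 : j - A.length = 0 := by omega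
  simp [e1]

lemma rot_f_mid {j : ℕ} (hj1 : A.length ≤ j) (hj2 : j ≤ A.length + B.length) :
    f (A ++ (B ++ false :: C)) j = f (A ++ false :: (B ++ C)) (j+1) := by
  rw [f_append, f_append, f_cons_false, f_append, f_cons_false, f_append]
  have e0 : f A j = f A (j+1) := by
    rw [f_of_len_le A hj1, f_of_len_le A (show A.length ≤ j + 1 by omega)]
  have e1 : j - A.length - B.length = 0 := by omega
  have e2 : j + 1 - A.length - 1 = j - A.length := by omega
  rw [e0, e2, e1]

lemma rot_h_mid {j : ℕ} (hj1 : A.length ≤ j) (hj2 : j ≤ A.length + B.length) :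
    h (A ++ (B ++ false :: C)) j = h (A ++ false :: (B ++ C)) (j+1) + 1 := by
  rw [h_append, h_append, h_cons_false, h_append, h_cons_false, h_append]
  have e0 : h A j = h A (j+1) := by
    rw [h_of_len_le A hj1, h_of_len_le A (show A.length ≤ j + 1 by omega)]
  have e1 : j - A.length - B.length = 0 := by omega
  have e2 : j + 1 - A.length - 1 = j - A.length := by omega
  have e3 : min (j + 1 - A.length) 1 = 1 := by omega
  rw [e0, e2, e1, e3]
  simp only [Nat.zero_sub, h_zero, Nat.zero_min]
  push_cast
  ring

lemma rot_f_high {j : ℕ} (hj : A.length + B.length + 1 ≤ j) :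
    f (A ++ (B ++ false :: C)) j = f (A ++ false :: (B ++ C)) j := by
  rw [f_append, f_append, f_cons_false, f_append, f_cons_false, f_append]
  have e1 : f B (j - A.length) = B.count true := f_of_len_le B (by omega)
  have e2 : f B (j - A.length - 1) = B.count true := f_of_len_le B (by omega)
  have e3 : j - A.length - B.length - 1 = j - A.length - 1 - B.length := by omega
  rw [e1, e2, e3]

lemma rot_h_high {j : ℕ} (hj : A.length + B.length + 1 ≤ j) (hB : IsDyck B) :
    h (A ++ (B ++ false :: C)) j = h (A ++ false :: (B ++ C)) j := by
  rw [h_append, h_append, h_cons_false, h_append, h_cons_false, h_append]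
  have e1 : h B (j - A.length) = 0 := by
    rw [h_of_len_le B (by omega)]; exact isDyck_h_len hB
  have e2 : h B (j - A.length - 1) = 0 := by
    rw [h_of_len_le B (by omega)]; exact isDyck_h_len hB
  have e3 : j - A.length - B.length - 1 = j - A.length - 1 - B.length := by omega
  have e4 : min (j - A.length) 1 = 1 := by omega
  have e5 : min (j - A.length - B.length) 1 = 1 := by omega
  rw [e1, e2, e3, e4, e5]
  ring

end Rot


section RotLetters

variable (A B C : List Bool)

lemma rot_getD_low {j : ℕ} (hj : j < A.length) (d : Bool) :
    (A ++ (B ++ false :: C)).getD j d = (A ++ false :: (B ++ C)).getD j d := by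
  rw [List.getD_append _ _ _ _ hj, List.getD_append _ _ _ _ hj]

lemma rot_getD_P_a (d : Bool) : (A ++ false :: (B ++ C)).getD A.length d = false := by
  rw [List.getD_append_right _ _ _ _ (le_refl _), Nat.sub_self]
  rfl

lemma rot_getD_mid {j : ℕ} (hj1 : A.length ≤ j) (hj2 : j < A.length + B.length) (d : Bool) :
    (A ++ (B ++ false :: C)).getD j d = (A ++ false :: (B ++ C)).getD (j+1) d := by
  rw [List.getD_append_right _ _ _ _ hj1]
  rw [List.getD_append _ _ _ _ (show j - A.length < B.length by omega)]
  rw [List.getD_append_right _ _ _ _ (show A.length ≤ j + 1 by omega)]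
  have h2 : (false :: (B ++ C)) = [false] ++ (B ++ C) := rfl
  rw [h2, List.getD_append_right _ _ _ _ (show [false].length ≤ j + 1 - A.length by simp; omega)]
  rw [List.getD_append _ _ _ _ (show j + 1 - A.length - [false].length < B.length by simp; omega)]
  congr 1
  simp
  omega

lemma rot_getD_Q_ab (d : Bool) :
    (A ++ (B ++ false :: C)).getD (A.length + B.length) d = false := by
  rw [List.getD_append_right _ _ _ _ (by omega),
    List.getD_append_right _ _ _ _ (by omega : B.length ≤ A.length + B.length - A.length)]
  have : A.length + B.length - A.length - B.length = 0 := by omega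
  rw [this]
  rfl

lemma rot_getD_high {j : ℕ} (hj : A.length + B.length < j) (d : Bool) :
    (A ++ (B ++ false :: C)).getD j d = (A ++ false :: (B ++ C)).getD j d := by
  rw [List.getD_append_right _ _ _ _ (by omega : A.length ≤ j),
    List.getD_append_right _ _ _ _ (by omega : A.length ≤ j),
    List.getD_append_right _ _ _ _ (by omega : B.length ≤ j - A.length)]
  have h1 : (false :: C) = [false] ++ C := rfl
  have h2 : (false :: (B ++ C)) = [false] ++ (B ++ C) := rfl
  rw [h1, h2, List.getD_append_right _ _ _ _ (by simp; omega),
    List.getD_append_right _ _ _ _ (by simp; omega),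
    List.getD_append_right _ _ _ _ (by simp; omega)]
  congr 1
  simp
  omega

end RotLetters


lemma rot_hP_B (A B C : List Bool) {u : ℕ} (hu : u ≤ B.length) :
    h (A ++ false :: (B ++ C)) (A.length + 1 + u) =
      h (A ++ false :: (B ++ C)) (A.length + 1) + h B u := by
  rw [h_append, h_append, h_cons_false, h_cons_false, h_append, h_append]
  have e1 : A.length + 1 + u - A.length = 1 + u := by omega
  have e2 : A.length + 1 - A.length = 1 := by omega
  rw [e1, e2]
  have e3 : h A (A.length + 1 + u) = h A (A.length + 1) := by
    rw [h_of_len_le A (show A.length ≤ A.length + 1 + u by omega)]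
    rw [h_of_len_le A (show A.length ≤ A.length + 1 by omega)]
  have e4 : (1 : ℕ) + u - 1 = u := by omega
  have e5 : min (1 + u) 1 = 1 := by omega
  have e6 : u - B.length = 0 := by omega
  have e7 : (1 : ℕ) - 1 = 0 := by omega
  rw [e3, e4, e5, e6, e7]
  simp only [h_zero, Nat.zero_sub, min_self]
  push_cast
  ring

lemma rot_count (A B C : List Bool) :
    (A ++ (B ++ false :: C)).count true = (A ++ false :: (B ++ C)).count true := by
  simp [List.count_append, List.count_cons]

lemma rot_dyck {A B C : List Bool} (hB : IsDyck B)
    (hP : IsDyck (A ++ false :: (B ++ C))) : IsDyck (A ++ (B ++ false :: C)) := by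
  rw [isDyck_iff_h]
  have hPL := isDyck_h_len hP
  have hPn := isDyck_h_nonneg hP
  have hlenP := (rot_len A B C).1
  have hlenQ := (rot_len A B C).2
  constructor
  · rw [hlenQ, rot_h_high A B C (by omega) hB, ← hlenP]
    exact hPL
  · intro j
    rcases Nat.lt_or_ge j A.length with hj | hj
    · rw [rot_h_low A B C (by omega)]; exact hPn j
    rcases Nat.lt_or_ge (A.length + B.length) j with hj2 | hj2
    · rw [rot_h_high A B C (by omega) hB]; exact hPn j
    · rw [rot_h_mid A B C hj (by omega)]
      have := hPn (j+1); omega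

lemma rot_dist {A B C : List Bool} (hB : IsDyck B) (hBne : B ≠ [])
    (hP : IsDyck (A ++ false :: (B ++ C))) {i : ℕ} (h1 : 1 ≤ i)
    (h2 : i ≤ (A ++ false :: (B ++ C)).count true) :
    distFn (A ++ (B ++ false :: C)) i =
      distFn (A ++ false :: (B ++ C)) i +
      (if matchIdx (A ++ false :: (B ++ C)) (upPos (A ++ false :: (B ++ C)) i) = A.length
        then B.length else 0) := by
  classical
  have hQ : IsDyck (A ++ (B ++ false :: C)) := rot_dyck hB hP
  have hlenP := (rot_len A B C).1
  have hlenQ := (rot_len A B C).2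
  have hb1 : 0 < B.length := List.length_pos_iff.mpr hBne
  have hBh : ∀ u, 0 ≤ h B u := isDyck_h_nonneg hB
  obtain ⟨hu1, hu2, hu3, hu4⟩ := up_spec (A ++ false :: (B ++ C)) h1 h2
  set k := upPos (A ++ false :: (B ++ C)) i with hkdef
  have hku : (A ++ false :: (B ++ C))[k]'hu1 = true := by
    rw [← getD_eq_get _ hu1 false]; exact hu2
  obtain ⟨s1, s2, s3, s4, s5, s6⟩ := match_spec hP hu1 hku
  set m := matchIdx (A ++ false :: (B ++ C)) k with hmdef
  have hPka : k ≠ A.length := by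
    intro hcon
    have hfa := rot_getD_P_a A B C false
    rw [← hcon] at hfa
    rw [hfa] at hu2
    exact Bool.false_ne_true hu2
  have hPa1 : h (A ++ false :: (B ++ C)) (A.length + B.length + 1) =
      h (A ++ false :: (B ++ C)) (A.length + 1) := by
    have := rot_hP_B A B C (le_refl B.length)
    rw [isDyck_h_len hB] at this
    rw [show A.length + B.length + 1 = A.length + 1 + B.length by omega, this]
    ring
  unfold distFn
  rw [← hkdef, ← hmdef]
  rcases Nat.lt_or_ge k A.length with hkcase | hkcase
  · -- k strictly inside A
    have hgd : (A ++ (B ++ false :: C)).getD k false = true := by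
      rw [rot_getD_low A B C hkcase false]; exact hu2
    have hfq : f (A ++ (B ++ false :: C)) (k+1) = i := by
      rw [rot_f_low A B C (by omega)]; exact hu3
    have hkQ : upPos (A ++ (B ++ false :: C)) i = k := up_eq_of _ hgd hfq
    have hQklt : k < (A ++ (B ++ false :: C)).length := by omega
    have hQku : (A ++ (B ++ false :: C))[k]'hQklt = true := by
      rw [← getD_eq_get _ hQklt false]; exact hgd
    have hQhk : h (A ++ (B ++ false :: C)) k = h (A ++ false :: (B ++ C)) k :=
      rot_h_low A B C (by omega)
    rcases Nat.lt_or_ge m A.length with hmcase | hmcase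
    · -- m < a : nothing moves
      have hmQ : matchIdx (A ++ (B ++ false :: C)) k = m := by
        apply match_unique hQ hQklt hQku s1
        · rw [rot_h_low A B C (by omega : m + 1 ≤ A.length), hQhk]; exact s4
        · intro t ht1 ht2
          rw [rot_h_low A B C (by omega : t ≤ A.length), hQhk]
          exact s5 t ht1 ht2
      rw [hkQ, hmQ, if_neg (by omega)]
      omega
    rcases Nat.eq_or_lt_of_le hmcase with hmeq | hmgt
    · -- m = a : the rotated down-step is the match of u_i
      have hs4' : h (A ++ false :: (B ++ C)) (A.length + 1) =
          h (A ++ false :: (B ++ C)) k := by rw [hmeq]; exact s4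
      have hmQ : matchIdx (A ++ (B ++ false :: C)) k = A.length + B.length := by
        apply match_unique hQ hQklt hQku (by omega)
        · rw [rot_h_high A B C (by omega) hB, hQhk, hPa1]
          exact hs4'
        · intro t ht1 ht2
          rw [hQhk]
          rcases Nat.lt_or_ge t A.length with htc | htc
          · rw [rot_h_low A B C (by omega)]
            exact s5 t ht1 (by omega)
          · rw [rot_h_mid A B C htc (by omega)]
            have hbu := rot_hP_B A B C (show t - A.length ≤ B.length by omega)
            rw [show A.length + 1 + (t - A.length) = t + 1 by omega] at hbu
            have := hBh (t - A.length)
            omega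
      rw [hkQ, hmQ, if_pos hmeq.symm]
      omega
    · -- m > a : m is beyond the B block
      have hmhigh : A.length + B.length + 1 ≤ m := by
        by_contra hcon
        have hin := s5 (A.length + 1) (by omega) (by omega)
        have hbu := rot_hP_B A B C (show m + 1 - (A.length + 1) ≤ B.length by omega)
        rw [show A.length + 1 + (m + 1 - (A.length + 1)) = m + 1 by omega] at hbu
        have := hBh (m + 1 - (A.length + 1))
        omega
      have hmQ : matchIdx (A ++ (B ++ false :: C)) k = m := by
        apply match_unique hQ hQklt hQku s1
        · rw [rot_h_high A B C (by omega) hB, hQhk]; exact s4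
        · intro t ht1 ht2
          rw [hQhk]
          rcases Nat.lt_or_ge t A.length with htc | htc
          · rw [rot_h_low A B C (by omega)]
            exact s5 t ht1 (by omega)
          rcases Nat.lt_or_ge (A.length + B.length) t with htc2 | htc2
          · rw [rot_h_high A B C (by omega) hB]
            exact s5 t ht1 ht2
          · rw [rot_h_mid A B C htc htc2]
            have := s5 (t+1) (by omega) (by omega)
            omega
      rw [hkQ, hmQ, if_neg (by omega)]
      omega
  rcases Nat.eq_or_lt_of_le hkcase with hkeq | hkgt
  · exact absurd hkeq.symm hPka
  rcases Nat.lt_or_ge (A.length + B.length) k with hkhigh | hkmid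
  · -- k beyond the block
    have hgd : (A ++ (B ++ false :: C)).getD k false = true := by
      rw [rot_getD_high A B C hkhigh false]; exact hu2
    have hfq : f (A ++ (B ++ false :: C)) (k+1) = i := by
      rw [rot_f_high A B C (by omega)]; exact hu3
    have hkQ : upPos (A ++ (B ++ false :: C)) i = k := up_eq_of _ hgd hfq
    have hQklt : k < (A ++ (B ++ false :: C)).length := by omega
    have hQku : (A ++ (B ++ false :: C))[k]'hQklt = true := by
      rw [← getD_eq_get _ hQklt false]; exact hgd
    have hmQ : matchIdx (A ++ (B ++ false :: C)) k = m := by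
      apply match_unique hQ hQklt hQku s1
      · rw [rot_h_high A B C (by omega) hB, rot_h_high A B C (by omega) hB]; exact s4
      · intro t ht1 ht2
        rw [rot_h_high A B C (by omega) hB, rot_h_high A B C (by omega) hB]
        exact s5 t ht1 ht2
    rw [hkQ, hmQ, if_neg (by omega)]
    omega
  · -- k inside the block B
    have hgd : (A ++ (B ++ false :: C)).getD (k-1) false = true := by
      rw [rot_getD_mid A B C (by omega) (by omega) false,
        show k - 1 + 1 = k by omega]
      exact hu2
    have hfq : f (A ++ (B ++ false :: C)) ((k-1)+1) = i := by
      rw [show k - 1 + 1 = k by omega, rot_f_mid A B C (by omega) (by omega)]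
      exact hu3
    have hkQ : upPos (A ++ (B ++ false :: C)) i = k - 1 := up_eq_of _ hgd hfq
    have hQklt : k - 1 < (A ++ (B ++ false :: C)).length := by omega
    have hQku : (A ++ (B ++ false :: C))[k-1]'hQklt = true := by
      rw [← getD_eq_get _ hQklt false]; exact hgd
    -- the match stays inside the block
    have hmub : m ≤ A.length + B.length := by
      have hba : h (A ++ false :: (B ++ C)) (A.length + 1) ≤
          h (A ++ false :: (B ++ C)) k := by
        have hbu := rot_hP_B A B C (show k - (A.length + 1) ≤ B.length by omega)
        rw [show A.length + 1 + (k - (A.length + 1)) = k by omega] at hbu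
        have := hBh (k - (A.length + 1))
        omega
      obtain ⟨t, ht1, ht2, ht3⟩ := ivt_down (h (A ++ false :: (B ++ C)))
        (h (A ++ false :: (B ++ C)) k) ((A.length + B.length + 1) - (k+1)) (k+1)
        (fun t ha hb => h_step _ (by omega))
        (by have : h (A ++ false :: (B ++ C)) (k+1) =
              h (A ++ false :: (B ++ C)) k + 1 := by
              rw [h_succ _ hu1, hku]; simp
            omega)
        (by rw [show k + 1 + (A.length + B.length + 1 - (k+1)) = A.length + B.length + 1
              by omega, hPa1]; omega)
      have htne : t ≠ k + 1 := by
        intro hcon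
        rw [hcon, h_succ _ hu1, hku] at ht3
        simp at ht3
      have := s6 (t-1) (by omega) (by rw [show t - 1 + 1 = t by omega]; exact ht3)
      omega
    have hmQ : matchIdx (A ++ (B ++ false :: C)) (k-1) = m - 1 := by
      apply match_unique hQ hQklt hQku (by omega : k - 1 < m - 1)
      · rw [show m - 1 + 1 = m by omega, rot_h_mid A B C (by omega) (by omega),
          rot_h_mid A B C (by omega) (by omega), show k - 1 + 1 = k by omega]
        omega
      · intro t ht1 ht2
        rw [rot_h_mid A B C (by omega) (by omega : t ≤ A.length + B.length),
          rot_h_mid A B C (by omega) (by omega), show k - 1 + 1 = k by omega]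
        have := s5 (t+1) (by omega) (by omega)
        omega
    rw [hkQ, hmQ, if_neg (by omega)]
    omega


lemma step_facts {P Q : List Bool} (hstep : TamariStep P Q) (hP : IsDyck P) :
    IsDyck Q ∧ Q.count true = P.count true ∧
      ∀ i, 1 ≤ i → i ≤ P.count true → distFn P i ≤ distFn Q i := by
  obtain ⟨A, B, C, hB, hBne, hPe, hQe⟩ := hstep
  subst hPe hQe
  exact ⟨rot_dyck hB hP, rot_count A B C,
    fun i h1 h2 => by rw [rot_dist hB hBne hP h1 h2]; omega⟩

lemma tamari_forward {P Q : List Bool} (hP : IsDyck P) (hle : TamariLe P Q) :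
    IsDyck Q ∧ Q.count true = P.count true ∧
      ∀ i, 1 ≤ i → i ≤ P.count true → distFn P i ≤ distFn Q i := by
  induction hle with
  | refl => exact ⟨hP, rfl, fun _ _ _ => le_refl _⟩
  | tail hab hbc ih =>
    obtain ⟨hb, hcount, hdist⟩ := ih
    obtain ⟨hcc, hcount2, hdist2⟩ := step_facts hbc hb
    refine ⟨hcc, by rw [hcount2, hcount], fun i h1 h2 => ?_⟩
    exact le_trans (hdist i h1 h2) (hdist2 i h1 (by omega))

lemma block_dyck {w : List Bool} (hw : IsDyck w) {k : ℕ} (hk : k < w.length)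
    (hku : w[k] = true) :
    IsDyck ((w.drop k).take (matchIdx w k + 1 - k)) := by
  obtain ⟨s1, s2, s3, s4, s5, s6⟩ := match_spec hw hk hku
  rw [seg_isDyck_iff w (by omega : k ≤ matchIdx w k + 1) (by omega)]
  refine ⟨s4, fun t ht1 ht2 => ?_⟩
  rcases Nat.eq_or_lt_of_le ht1 with he | hlt
  · exact le_of_eq (congrArg (h w) he)
  rcases Nat.eq_or_lt_of_le ht2 with he2 | hlt2
  · rw [he2]; omega
  · have := s5 t hlt (by omega); omega

lemma up_one {w : List Bool} (hw : IsDyck w) (hn : 1 ≤ w.count true) : upPos w 1 = 0 := by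
  have hlen : 0 < w.length := by
    by_contra hcon
    have : w = [] := by
      cases w
      · rfl
      · simp at hcon
    rw [this] at hn; simp at hn
  have hl : w[0]'hlen = true := by
    cases hl0 : w[0]'hlen
    · exfalso
      have h1 := h_succ w hlen
      rw [hl0] at h1; simp at h1
      have := isDyck_h_nonneg hw 1
      rw [h1] at this; simp at this
    · rfl
  apply up_eq_of w (by rw [getD_eq_get w hlen]; exact hl)
  rw [f_succ w hlen, hl]
  simp [f]

lemma match_eq_up_add_dist {w : List Bool} (hw : IsDyck w) {i : ℕ} (h1 : 1 ≤ i)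
    (h2 : i ≤ w.count true) :
    matchIdx w (upPos w i) = upPos w i + distFn w i := by
  obtain ⟨hu1, hu2, hu3, hu4⟩ := up_spec w h1 h2
  obtain ⟨s1, _, _, _, _, _⟩ := match_spec hw hu1 (up_true h1 h2)
  unfold distFn
  omega

lemma up_succ_char {w : List Bool} (hw : IsDyck w) {i : ℕ} (h1 : 1 ≤ i)
    (h2 : i + 1 ≤ w.count true) :
    upPos w (i+1) = sInf {p | upPos w i < p ∧
      ∀ t, 1 ≤ t → t ≤ i → upPos w t + distFn w t ≠ p} := by
  obtain ⟨hu1, hu2, hu3, hu4⟩ := up_spec w h1 (by omega)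
  obtain ⟨hv1, hv2, hv3, hv4⟩ := up_spec w (show 1 ≤ i + 1 by omega) h2
  have hmono := up_mono w h1 (show i < i + 1 by omega) h2
  have hmem : upPos w (i+1) ∈ {p | upPos w i < p ∧
      ∀ t, 1 ≤ t → t ≤ i → upPos w t + distFn w t ≠ p} := by
    refine ⟨hmono, fun t ht1 ht2 hteq => ?_⟩
    have hti : t ≤ w.count true := by omega
    obtain ⟨hw1, hw2, hw3, hw4⟩ := up_spec w ht1 hti
    obtain ⟨t1, t2, t3, t4, t5, t6⟩ := match_spec hw hw1 (up_true ht1 hti)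
    rw [← match_eq_up_add_dist hw ht1 hti] at hteq
    have : w.getD (matchIdx w (upPos w t)) true = false := t3
    rw [hteq] at this
    rw [getD_eq_get w hv1] at this
    rw [← getD_eq_get w hv1 false] at this
    rw [hv2] at this
    exact Bool.false_ne_true this.symm
  apply le_antisymm _ (Nat.sInf_le hmem)
  set S := {p | upPos w i < p ∧ ∀ t, 1 ≤ t → t ≤ i → upPos w t + distFn w t ≠ p} with hS
  have hSne : S.Nonempty := ⟨_, hmem⟩
  have hsmem := Nat.sInf_mem hSne
  by_contra hcon
  push_neg at hcon
  -- then sInf S is a position strictly between consecutive up-steps, hence a down-step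
  set p := sInf S with hp
  have hp1 : upPos w i < p := hsmem.1
  have hp2 : p < upPos w (i+1) := hcon
  have hplen : p < w.length := by omega
  have hfp : f w (p+1) = i ∧ f w p = i := by
    constructor
    · have l1 : f w (upPos w i + 1) ≤ f w (p+1) := f_mono w (by omega)
      have l2 : f w (p+1) ≤ f w (upPos w (i+1)) := f_mono w (by omega)
      omega
    · have l1 : f w (upPos w i + 1) ≤ f w p := f_mono w (by omega)
      have l2 : f w p ≤ f w (upPos w (i+1)) := f_mono w (by omega)
      omega
  have hpd : w[p]'hplen = false := by
    cases hc : w[p]'hplen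
    · rfl
    · exfalso
      have := f_succ w hplen
      rw [hc] at this; simp at this
      omega
  obtain ⟨t0, ht01, ht02, ht03⟩ := down_owner hw hplen hpd
  -- the owner's up-step is before p, so its index is at most i
  obtain ⟨hw1, hw2, hw3, hw4⟩ := up_spec w ht01 ht02
  obtain ⟨t1, t2, t3, t4, t5, t6⟩ := match_spec hw hw1 (up_true ht01 ht02)
  rw [ht03] at t1
  have ht0i : t0 ≤ i := by
    have : f w (upPos w t0 + 1) ≤ f w p := f_mono w (by omega)
    omega
  exact hsmem.2 t0 ht01 ht0i (by rw [← match_eq_up_add_dist hw ht01 ht02]; exact ht03)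

lemma dist_inj {P Q : List Bool} (hP : IsDyck P) (hQ : IsDyck Q)
    (hc : P.count true = Q.count true)
    (hd : ∀ i, 1 ≤ i → i ≤ P.count true → distFn P i = distFn Q i) : P = Q := by
  have hup : ∀ i, 1 ≤ i → i ≤ P.count true → upPos P i = upPos Q i := by
    intro i
    induction i using Nat.strong_induction_on with
    | _ i ih =>
      intro h1i h2i
      rcases Nat.eq_or_lt_of_le h1i with he | hgt
      · rw [← he, up_one hP (by omega), up_one hQ (by omega)]
      · obtain ⟨i', rfl⟩ : ∃ i', i = i' + 1 := ⟨i - 1, by omega⟩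
        rw [up_succ_char hP (by omega) (by omega),
          up_succ_char hQ (by omega) (by omega : i' + 1 ≤ Q.count true)]
        congr 1
        ext p
        constructor
        · rintro ⟨hpp1, hpp2⟩
          refine ⟨by rw [← ih i' (by omega) (by omega) (by omega)]; exact hpp1,
            fun t ht1 ht2 => ?_⟩
          rw [← ih t (by omega) ht1 (by omega), ← hd t ht1 (by omega)]
          exact hpp2 t ht1 ht2
        · rintro ⟨hpp1, hpp2⟩
          refine ⟨by rw [ih i' (by omega) (by omega) (by omega)]; exact hpp1,
            fun t ht1 ht2 => ?_⟩
          rw [ih t (by omega) ht1 (by omega), hd t ht1 (by omega)]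
          exact hpp2 t ht1 ht2
  -- equal lengths
  have hlenP : P.length = 2 * P.count true := by
    have := count_true_add_count_false P
    have := hP.1
    omega
  have hlenQ : Q.length = 2 * P.count true := by
    have := count_true_add_count_false Q
    have := hQ.1
    omega
  apply List.ext_getElem (by omega)
  intro p hp1 hp2
  have key : ∀ (w : List Bool), IsDyck w → w.count true = P.count true →
      ∀ (hpw : p < w.length), w[p] = true → ∃ i, 1 ≤ i ∧ i ≤ P.count true ∧ upPos w i = p := by
    intro w hw hwc hpw hptrue
    refine ⟨f w (p+1), ?_, ?_, ?_⟩
    · have := f_succ w hpw; rw [hptrue] at this; simp at this; omega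
    · rw [← hwc]; exact f_le_count w (p+1)
    · exact up_eq_of w (by rw [getD_eq_get w hpw]; exact hptrue) rfl
  cases hv : P[p] with
  | true =>
    obtain ⟨i, hi1, hi2, hi3⟩ := key P hP rfl hp1 hv
    rw [hup i hi1 hi2] at hi3
    obtain ⟨c1, c2, c3, c4⟩ := up_spec Q hi1 (by omega)
    rw [hi3] at c2
    rw [getD_eq_get Q hp2] at c2
    exact c2.symm
  | false =>
    cases hv2 : Q[p] with
    | false => exact rfl
    | true =>
      exfalso
      obtain ⟨i, hi1, hi2, hi3⟩ := key Q hQ hc.symm hp2 hv2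
      rw [← hup i hi1 hi2] at hi3
      obtain ⟨c1, c2, c3, c4⟩ := up_spec P hi1 hi2
      rw [hi3, getD_eq_get P hp1, hv] at c2
      exact Bool.false_ne_true c2


lemma backward (N : ℕ) : ∀ P Q : List Bool, IsDyck P → IsDyck Q →
    P.count true = Q.count true →
    (∀ i, 1 ≤ i → i ≤ P.count true → distFn P i ≤ distFn Q i) →
    (Finset.Icc 1 (P.count true)).sum (fun i => distFn Q i - distFn P i) ≤ N →
    TamariLe P Q := by
  induction N with
  | zero =>
    intro P Q hP hQ hc hd hsum
    have hz : ∀ i ∈ Finset.Icc 1 (P.count true), distFn Q i - distFn P i = 0 :=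
      Finset.sum_eq_zero_iff.mp (Nat.le_zero.mp hsum)
    have : P = Q := dist_inj hP hQ hc (fun i h1 h2 => by
      have l1 := hz i (Finset.mem_Icc.mpr ⟨h1, h2⟩)
      have l2 := hd i h1 h2
      omega)
    rw [this]
    exact Relation.ReflTransGen.refl
  | succ N ih =>
    intro P Q hP hQ hc hd hsum
    by_cases hall : ∀ i, 1 ≤ i → i ≤ P.count true → distFn Q i ≤ distFn P i
    · have : P = Q := dist_inj hP hQ hc
        (fun i h1 h2 => le_antisymm (hd i h1 h2) (hall i h1 h2))
      rw [this]
      exact Relation.ReflTransGen.refl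
    push_neg at hall
    obtain ⟨i0, hi01, hi02, hi03⟩ := hall
    set n := P.count true with hn
    set Sf := (Finset.Icc 1 n).filter (fun t => distFn P t < distFn Q t) with hSf
    have hSfne : Sf.Nonempty :=
      ⟨i0, Finset.mem_filter.mpr ⟨Finset.mem_Icc.mpr ⟨hi01, hi02⟩, hi03⟩⟩
    obtain ⟨i, hiS, himax⟩ := Finset.exists_max_image Sf (fun t => matchIdx P (upPos P t)) hSfne
    obtain ⟨hiIcc, hilt⟩ := Finset.mem_filter.mp hiS
    obtain ⟨hi1, hi2⟩ := Finset.mem_Icc.mp hiIcc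
    obtain ⟨hu1, hu2, hu3, hu4⟩ := up_spec P hi1 hi2
    obtain ⟨s1, s2, s3, s4, s5, s6⟩ := match_spec hP hu1 (up_true hi1 hi2)
    obtain ⟨d1, d2, d3, d4⟩ := dist_facts hP hi1 hi2
    obtain ⟨e1, e2, e3, e4⟩ := dist_facts hQ hi1 (by omega : i ≤ Q.count true)
    set k := upPos P i with hk
    set m := matchIdx P k with hm
    have hlenP : P.length = 2 * n := by
      have l1 := count_true_add_count_false P
      have l2 := hP.1
      omega
    have hkb := up_le_bound hP hi1 hi2
    have hqb := dist_le_bound hQ hi1 (by omega : i ≤ Q.count true)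
    have hm1len : m + 1 < P.length := by
      by_contra hcon
      omega
    have hfm1 : f P (m+1) = f P m := by
      have l1 := f_succ P (show m < P.length by omega)
      have hmf : P[m]'(by omega) = false := by
        rw [← getD_eq_get P (by omega : m < P.length) true]; exact s3
      rw [hmf] at l1; simp at l1; omega
    -- the letter after m must be an up-step
    have hmtrue : P[m+1]'(by omega) = true := by
      cases hml : P[m+1]'(by omega)
      · exfalso
        obtain ⟨i', ht1, ht2, ht3⟩ := down_owner hP (by omega) hml
        obtain ⟨w1, w2, w3, w4⟩ := up_spec P ht1 ht2
        obtain ⟨t1, t2, t3, t4, t5, t6⟩ := match_spec hP w1 (up_true ht1 ht2)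
        rw [ht3] at t1 t2 t4 t5 t6
        have hkk' : upPos P i' < k := by
          rcases lt_trichotomy (upPos P i') k with hlt | heq | hgt
          · exact hlt
          · exfalso
            rw [hk] at heq
            rw [heq, ← hk, ← hm] at ht3
            omega
          · exfalso
            have l1 := s5 (upPos P i') hgt (by omega)
            have l2 := t5 (m+1) (by omega) (by omega)
            omega
        have hii' : i' < i := by
          have := f_mono P (show upPos P i' + 1 ≤ k by omega)
          omega
        obtain ⟨d1', d2', d3', d4'⟩ := dist_facts hP ht1 ht2
        obtain ⟨e1', e2', e3', e4'⟩ := dist_facts hQ ht1 (by omega : i' ≤ Q.count true)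
        rw [ht3] at d1' d2' d3' d4'
        have hdle := hd i' ht1 ht2
        have hile : i ≤ f Q (matchIdx Q (upPos Q i')) := by omega
        have hnest := nesting hQ ht1 hii' (by omega : i' ≤ Q.count true) hile
        have hmono : f Q (matchIdx Q (upPos Q i)) ≤ f Q (matchIdx Q (upPos Q i')) :=
          f_mono Q (by omega)
        have hstrict : distFn P i' < distFn Q i' := by omega
        have hmem : i' ∈ Sf := Finset.mem_filter.mpr ⟨Finset.mem_Icc.mpr ⟨ht1, ht2⟩, hstrict⟩
        have := himax i' hmem
        simp only [ht3, ← hm] at this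
        omega
      · rfl
    have hfm2 : f P (m+2) = f P m + 1 := by
      have l1 := f_succ P (show m + 1 < P.length by omega)
      rw [hmtrue] at l1
      simp at l1
      rw [show m + 1 + 1 = m + 2 by omega] at l1
      omega
    set j := f P (m+2) with hj
    have hj1 : 1 ≤ j := by omega
    have hjgt : i < j := by omega
    have hjn : j ≤ n := by omega
    have hjup : upPos P j = m + 1 :=
      up_eq_of P (by rw [getD_eq_get P (show m + 1 < P.length by omega)]; exact hmtrue)
        (by rw [show m + 1 + 1 = m + 2 by omega, ← hj])
    obtain ⟨y1, y2, y3, y4, y5, y6⟩ := match_spec hP (show m + 1 < P.length by omega) hmtrue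
    set m' := matchIdx P (m+1) with hm'
    obtain ⟨dj1, dj2, dj3, dj4⟩ := dist_facts hP hj1 hjn
    rw [hjup] at dj1 dj2 dj3 dj4
    -- rotation pieces
    set A := P.take m with hA
    set B := (P.drop (m+1)).take (m' + 1 - (m+1)) with hB
    set C := P.drop (m'+1) with hC
    have hAlen : A.length = m := by rw [hA, List.length_take]; omega
    have hBdyck : IsDyck B := by
      rw [hB, hm']
      exact block_dyck hP (show m + 1 < P.length by omega) hmtrue
    have hBlen : B.length = m' - m := by
      rw [hB, List.length_take, List.length_drop]
      omega
    have hBne : B ≠ [] := List.length_pos_iff.mp (by rw [hBlen]; omega)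
    have hPm_false : P[m]'(by omega) = false := by
      rw [← getD_eq_get P (by omega : m < P.length) true]; exact s3
    have hdecomp : P = A ++ false :: (B ++ C) := by
      have e0 : P.drop (m'+1) = (P.drop (m+1)).drop (m' + 1 - (m+1)) := by
        rw [List.drop_drop]
        congr 1
        omega
      have e1 : P.drop (m+1) = B ++ C := by
        rw [hB, hC, e0, List.take_append_drop]
      have e2 : P.drop m = false :: (B ++ C) := by
        rw [List.drop_eq_getElem_cons (show m < P.length by omega), hPm_false, e1]
      conv_lhs => rw [← List.take_append_drop m P]
      rw [e2, hA]
    have hPd : IsDyck (A ++ false :: (B ++ C)) := by rw [← hdecomp]; exact hP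
    set P' := A ++ (B ++ false :: C) with hP'
    have hstep : TamariStep P P' := ⟨A, B, C, hBdyck, hBne, hdecomp, rfl⟩
    have hP'dyck : IsDyck P' := rot_dyck hBdyck hPd
    have hcount' : P'.count true = n := by
      rw [hP', rot_count A B C, ← hdecomp, hn]
    have hdist' : ∀ t, 1 ≤ t → t ≤ n →
        distFn P' t = distFn P t + (if matchIdx P (upPos P t) = m then m' - m else 0) := by
      intro t ht1 ht2
      have hr := rot_dist (A := A) (B := B) (C := C) hBdyck hBne hPd ht1
        (by rw [← hdecomp]; omega)
      rw [← hdecomp, ← hP', hAlen, hBlen] at hr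
      exact hr
    have hil : distFn P' i = distFn P i + (m' - m) := by
      rw [hdist' i hi1 hi2, if_pos (by rw [← hk, ← hm])]
    have hother : ∀ t, 1 ≤ t → t ≤ n → t ≠ i → distFn P' t = distFn P t := by
      intro t ht1 ht2 htne
      rw [hdist' t ht1 ht2, if_neg, Nat.add_zero]
      intro hcon
      exact htne (owner_unique hP ht1 (by omega) hi1 (by omega) (by rw [hcon, hm, hk]))
    have hbound : distFn P' i ≤ distFn Q i := by
      obtain ⟨ej1, ej2, ej3, ej4⟩ := dist_facts hQ hj1 (by omega : j ≤ Q.count true)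
      have hjle : j ≤ f Q (matchIdx Q (upPos Q i)) := by omega
      have hnest := nesting hQ hi1 hjgt (by omega : i ≤ Q.count true) hjle
      have hmono : f Q (matchIdx Q (upPos Q j)) ≤ f Q (matchIdx Q (upPos Q i)) :=
        f_mono Q (by omega)
      have hdPj := hd j hj1 (by omega : j ≤ P.count true)
      omega
    have hd' : ∀ t, 1 ≤ t → t ≤ P'.count true → distFn P' t ≤ distFn Q t := by
      intro t ht1 ht2
      rw [hcount'] at ht2
      by_cases hti : t = i
      · rw [hti]; exact hbound
      · rw [hother t ht1 ht2 hti]; exact hd t ht1 (by omega)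
    have hsum' : (Finset.Icc 1 (P'.count true)).sum (fun t => distFn Q t - distFn P' t) ≤ N := by
      have hlt : (Finset.Icc 1 n).sum (fun t => distFn Q t - distFn P' t) <
          (Finset.Icc 1 n).sum (fun t => distFn Q t - distFn P t) := by
        apply Finset.sum_lt_sum
        · intro t htmem
          obtain ⟨ht1, ht2⟩ := Finset.mem_Icc.mp htmem
          have := hdist' t ht1 ht2
          omega
        · refine ⟨i, Finset.mem_Icc.mpr ⟨hi1, hi2⟩, ?_⟩
          omega
      rw [hcount']
      omega
    exact Relation.ReflTransGen.head hstep
      (ih P' Q hP'dyck hQ (by omega) hd' hsum')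

end Tam

/-- `P ≤ Q` in the Tamari lattice iff `D_P(i) ≤ D_Q(i)` for all `1 ≤ i ≤ n`. -/
theorem tamari_le_iff_dist_le (n : ℕ) (P Q : List Bool)
    (hP : IsDyck P) (hQ : IsDyck Q)
    (hPn : P.count true = n) (hQn : Q.count true = n) :
    TamariLe P Q ↔ ∀ i, 1 ≤ i → i ≤ n → distFn P i ≤ distFn Q i := by
  constructor
  · intro hle i h1 h2
    exact (Tam.tamari_forward hP hle).2.2 i h1 (by omega)
  · intro hd
    exact Tam.backward ((Finset.Icc 1 (P.count true)).sum (fun i => distFn Q i - distFn P i))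
      P Q hP hQ (by omega) (fun i h1 h2 => hd i h1 (by omega)) (le_refl _)
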